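/- Let $K_t(x)$ be the exact scale invariant kernel family on the unit ball of $\mathbb{R}^d$ given by $K_t(x) = \int_S g_{e^{-t}}(|\langle x, s\rangle|)\sigma(ds)$ where $g_u(r) = \ln_+(2/r)$ for $r \ge u$ and $g_u(r) = \ln(2/u) + 1 - r/u$ for $r < u$, and $\sigma$ is the uniform probability measure on the sphere $S$. Then for all $|x| \le 1$ and all $h, t \ge 0$: $K_{t+h}(e^{-h}x) = K_t(x) + h$. -/

import Mathlib

open MeasureTheory

/-- The family of profile functions `g_u`: `g_u(r) = ln₊(2/r)` for `r ≥ u` and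
`g_u(r) = ln(2/u) + 1 - r/u` for `r < u`. -/
noncomputable def gker (u r : ℝ) : ℝ :=
  if u ≤ r then max (Real.log (2 / r)) 0 else Real.log (2 / u) + 1 - r / u

lemma gker_scale (t h r : ℝ) (ht : 0 ≤ t) (hh : 0 ≤ h) (hr : 0 ≤ r) (hr1 : r ≤ 1) :
    gker (Real.exp (-(t + h))) (Real.exp (-h) * r) = gker (Real.exp (-t)) r + h := by
  have hexp : Real.exp (-(t + h)) = Real.exp (-h) * Real.exp (-t) := by
    rw [← Real.exp_add]; ring_nf
  have hposh : 0 < Real.exp (-h) := Real.exp_pos _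
  have hpost : 0 < Real.exp (-t) := Real.exp_pos _
  by_cases hc : Real.exp (-t) ≤ r
  · have hrpos : 0 < r := lt_of_lt_of_le hpost hc
    have hc' : Real.exp (-(t + h)) ≤ Real.exp (-h) * r := by
      rw [hexp]; exact mul_le_mul_of_nonneg_left hc hposh.le
    rw [gker, gker, if_pos hc, if_pos hc']
    have h2r : (1:ℝ) ≤ 2 / r := by
      rw [le_div_iff₀ hrpos]; linarith
    have h2r' : (1:ℝ) ≤ 2 / (Real.exp (-h) * r) := by
      rw [le_div_iff₀ (mul_pos hposh hrpos)]
      have : Real.exp (-h) ≤ 1 := Real.exp_le_one_iff.mpr (by linarith)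
      nlinarith
    rw [max_eq_left (Real.log_nonneg h2r), max_eq_left (Real.log_nonneg h2r')]
    rw [div_mul_eq_div_div_swap, Real.log_div (by positivity) hposh.ne',
      Real.log_exp]
    ring
  · push_neg at hc
    have hc' : Real.exp (-h) * r < Real.exp (-(t + h)) := by
      rw [hexp]; exact (mul_lt_mul_iff_right₀ hposh).mpr hc
    rw [gker, gker, if_neg (not_le.mpr hc'), if_neg (not_le.mpr hc)]
    have hdiv : Real.exp (-h) * r / Real.exp (-(t + h)) = r / Real.exp (-t) := by
      rw [hexp, mul_div_mul_left _ _ hposh.ne']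
    rw [hdiv, Real.log_div (by norm_num) (Real.exp_ne_zero _),
      Real.log_div (by norm_num) (Real.exp_ne_zero _), Real.log_exp, Real.log_exp]
    ring

lemma gker_meas (u : ℝ) : Measurable (gker u) := by
  unfold gker
  apply Measurable.ite measurableSet_Ici
  · exact ((Real.measurable_log.comp (measurable_const.div measurable_id)).max
      measurable_const)
  · exact (measurable_const.sub (measurable_id.div measurable_const))

lemma gker_bound (u r : ℝ) (hu : 0 < u) (hu1 : u ≤ 1) (hr : 0 ≤ r) :
    |gker u r| ≤ Real.log (2 / u) + 1 := by
  have h2u : (1:ℝ) ≤ 2 / u := by rw [le_div_iff₀ hu]; linarith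
  have hlog : 0 ≤ Real.log (2 / u) := Real.log_nonneg h2u
  rw [gker]
  by_cases hc : u ≤ r
  · rw [if_pos hc, abs_of_nonneg (le_max_right _ _)]
    have hrpos : 0 < r := lt_of_lt_of_le hu hc
    have hlogr : Real.log (2 / r) ≤ Real.log (2 / u) := by
      apply Real.log_le_log (by positivity)
      exact div_le_div_of_nonneg_left (by norm_num) hu hc
    exact max_le (by linarith) (by linarith)
  · push_neg at hc
    rw [if_neg (not_le.mpr hc)]
    have h1 : r / u ≤ 1 := by rw [div_le_one hu]; linarith
    have h2 : 0 ≤ r / u := by positivity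
    rw [abs_of_nonneg (by linarith)]
    linarith

/-- Exact scaling of the exact scale invariant kernel
`K_t(x) = ∫_S g_{e^{-t}}(|⟨x,s⟩|) σ(ds)` over the unit sphere:
`K_{t+h}(e^{-h} x) = K t x + h` for `|x| ≤ 1` and `h, t ≥ 0`. -/
theorem stmt16 (d : ℕ) (σ : Measure (EuclideanSpace ℝ (Fin d)))
    [IsProbabilityMeasure σ] (hσ : ∀ᵐ s ∂σ, ‖s‖ = 1)
    (K : ℝ → EuclideanSpace ℝ (Fin d) → ℝ)
    (hK : ∀ t x, K t x = ∫ s, gker (Real.exp (-t)) |@inner ℝ _ _ x s| ∂σ) :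
    ∀ x : EuclideanSpace ℝ (Fin d), ‖x‖ ≤ 1 → ∀ t : ℝ, 0 ≤ t → ∀ h : ℝ, 0 ≤ h →
      K (t + h) (Real.exp (-h) • x) = K t x + h := by
  intro x hx t ht h hh
  rw [hK, hK]
  set u := Real.exp (-t) with hu
  have hupos : 0 < u := Real.exp_pos _
  have hu1 : u ≤ 1 := Real.exp_le_one_iff.mpr (by linarith)
  have hmeas : AEStronglyMeasurable (fun s => gker u |@inner ℝ _ _ x s|) σ := by
    apply Measurable.aestronglyMeasurable
    exact (gker_meas u).comp
      ((measurable_const.inner measurable_id).abs)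
  have hint : Integrable (fun s => gker u |@inner ℝ _ _ x s|) σ := by
    apply Integrable.mono' (integrable_const (Real.log (2 / u) + 1)) hmeas
    filter_upwards with s
    rw [Real.norm_eq_abs]
    exact gker_bound u _ hupos hu1 (abs_nonneg _)
  have hae : (fun s => gker (Real.exp (-(t + h))) |@inner ℝ _ _ (Real.exp (-h) • x) s|)
      =ᵐ[σ] fun s => gker u |@inner ℝ _ _ x s| + h := by
    filter_upwards [hσ] with s hs
    have hinner : @inner ℝ _ _ (Real.exp (-h) • x) s = Real.exp (-h) * @inner ℝ _ _ x s := by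
      rw [inner_smul_left]; norm_num
    have habs : |@inner ℝ _ _ (Real.exp (-h) • x) s| = Real.exp (-h) * |@inner ℝ _ _ x s| := by
      rw [hinner, abs_mul, abs_of_pos (Real.exp_pos _)]
    have hle : |@inner ℝ _ _ x s| ≤ 1 := by
      calc |@inner ℝ _ _ x s| ≤ ‖x‖ * ‖s‖ := abs_real_inner_le_norm x s
        _ ≤ 1 := by rw [hs, mul_one]; exact hx
    rw [habs, gker_scale t h _ ht hh (abs_nonneg _) hle]
  rw [integral_congr_ae hae, integral_add hint (integrable_const h),
    integral_const, probReal_univ]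
  simp
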